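/- arXiv:2007.03057 — 3 statements merged into one kernel-verified Lean document; each statement's English description precedes it below -/
import Mathlib

section
/- Let w be a pseudometric on points s_i,t_i,s_j,t_j. With μ_{ij} defined as the latency quantity μ_{ij} = min{2w(s_i,s_j)+2w(s_j,t_i)+w(t_i,t_j), 2w(s_i,s_j)+2w(s_j,t_j)+w(t_j,t_i), 2w(s_i,t_i)+w(t_i,s_j)+w(s_j,t_j)}, it holds that (μ_{ij}+μ_{ji})/2 + w(s_i,s_j) ≤ 2·min{μ_{ij}, μ_{ji}}. -/
noncomputable def mu {α : Type*} [PseudoMetricSpace α] (si ti sj tj : α) : ℝ :=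
  min (min (2 * dist si sj + 2 * dist sj ti + dist ti tj)
      (2 * dist si sj + 2 * dist sj tj + dist tj ti))
    (2 * dist si ti + dist ti sj + dist sj tj)

lemma mu_key {α : Type*} [PseudoMetricSpace α] (si ti sj tj : α) :
    mu sj tj si ti + 2 * dist si sj ≤ 3 * mu si ti sj tj := by
  have g1 : ∀ a b c : ℝ, min (min a b) c ≤ a := fun a b c =>
    le_trans (min_le_left _ _) (min_le_left _ _)
  have g2 : ∀ a b c : ℝ, min (min a b) c ≤ b := fun a b c =>
    le_trans (min_le_left _ _) (min_le_right _ _)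
  have g3 : ∀ a b c : ℝ, min (min a b) c ≤ c := fun a b c => min_le_right _ _
  have t1 : dist si ti ≤ dist si sj + dist sj ti := dist_triangle _ _ _
  have t2 : dist si tj ≤ dist si sj + dist sj tj := dist_triangle _ _ _
  have t3 : dist tj si ≤ dist tj sj + dist sj si := dist_triangle _ _ _
  have t4 : dist si sj ≤ dist si ti + dist ti sj := dist_triangle _ _ _
  have c1 : dist sj si = dist si sj := dist_comm _ _
  have c2 : dist tj ti = dist ti tj := dist_comm _ _
  have c3 : dist tj sj = dist sj tj := dist_comm _ _
  have n1 : (0:ℝ) ≤ dist sj ti := dist_nonneg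
  have n2 : (0:ℝ) ≤ dist ti tj := dist_nonneg
  have n3 : (0:ℝ) ≤ dist sj tj := dist_nonneg
  have n4 : (0:ℝ) ≤ dist si ti := dist_nonneg
  have n5 : (0:ℝ) ≤ dist ti sj := dist_nonneg
  have c4 : dist ti sj = dist sj ti := dist_comm _ _
  unfold mu
  have b1 := g1 (2 * dist sj si + 2 * dist si tj + dist tj ti)
    (2 * dist sj si + 2 * dist si ti + dist ti tj) (2 * dist sj tj + dist tj si + dist si ti)
  have b2 := g2 (2 * dist sj si + 2 * dist si tj + dist tj ti)
    (2 * dist sj si + 2 * dist si ti + dist ti tj) (2 * dist sj tj + dist tj si + dist si ti)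
  have b3 := g3 (2 * dist sj si + 2 * dist si tj + dist tj ti)
    (2 * dist sj si + 2 * dist si ti + dist ti tj) (2 * dist sj tj + dist tj si + dist si ti)
  rcases min_cases (min (2 * dist si sj + 2 * dist sj ti + dist ti tj)
      (2 * dist si sj + 2 * dist sj tj + dist tj ti))
      (2 * dist si ti + dist ti sj + dist sj tj) with ⟨h, _⟩ | ⟨h, _⟩ <;> rw [h]
  · rcases min_cases (2 * dist si sj + 2 * dist sj ti + dist ti tj)
        (2 * dist si sj + 2 * dist sj tj + dist tj ti) with ⟨h2, _⟩ | ⟨h2, _⟩ <;>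
      rw [h2] <;> linarith
  · linarith

theorem mu_avg_add_dist_le_two_min_mu {α : Type*} [PseudoMetricSpace α]
    (si ti sj tj : α) :
    (mu si ti sj tj + mu sj tj si ti) / 2 + dist si sj
      ≤ 2 * min (mu si ti sj tj) (mu sj tj si ti) := by
  have h1 := mu_key si ti sj tj
  have h2 := mu_key sj tj si ti
  rw [dist_comm sj si] at h2
  rcases min_cases (mu si ti sj tj) (mu sj tj si ti) with ⟨h, _⟩ | ⟨h, _⟩ <;>
    rw [h] <;> linarith
end

section
/- Let w be a pseudometric on points s_i,t_i,s_j,t_j, with u_{ij} = min{w(s_i,s_j)+w(s_j,t_i)+w(t_i,t_j), w(s_i,s_j)+w(s_j,t_j)+w(t_j,t_i), w(s_i,t_i)+w(t_i,s_j)+w(s_j,t_j)} and μ_{ij} = min{2w(s_i,s_j)+2w(s_j,t_i)+w(t_i,t_j), 2w(s_i,s_j)+2w(s_j,t_j)+w(t_j,t_i), 2w(s_i,t_i)+w(t_i,s_j)+w(s_j,t_j)}. Then u_{ij} + u_{ji} + 2·w(s_i,s_j) ≤ 4·min{μ_{ij}, μ_{ji}}. -/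
noncomputable def u {α : Type*} [PseudoMetricSpace α] (si ti sj tj : α) : ℝ :=
  min (min (dist si sj + dist sj ti + dist ti tj) (dist si sj + dist sj tj + dist tj ti))
    (dist si ti + dist ti sj + dist sj tj)

lemma key {α : Type*} [PseudoMetricSpace α] (si ti sj tj : α) :
    u si ti sj tj + u sj tj si ti + 2 * dist si sj ≤ 4 * mu si ti sj tj := by
  have h1 : u si ti sj tj ≤ dist si sj + dist sj ti + dist ti tj :=
    le_trans (min_le_left _ _) (min_le_left _ _)
  have h2 : u si ti sj tj ≤ dist si sj + dist sj tj + dist tj ti :=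
    le_trans (min_le_left _ _) (min_le_right _ _)
  have h3 : u si ti sj tj ≤ dist si ti + dist ti sj + dist sj tj := min_le_right _ _
  have g1 : u sj tj si ti ≤ dist sj si + dist si tj + dist tj ti :=
    le_trans (min_le_left _ _) (min_le_left _ _)
  have g3 : u sj tj si ti ≤ dist sj tj + dist tj si + dist si ti := min_le_right _ _
  have t1 : dist si tj ≤ dist si sj + dist sj ti + dist ti tj :=
    le_trans (dist_triangle si ti tj) (by
      have := dist_triangle si sj ti; linarith)
  have t2 : dist si tj ≤ dist si sj + dist sj tj := dist_triangle si sj tj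
  have t3 : dist si tj ≤ dist si ti + dist ti tj := dist_triangle si ti tj
  have t4 : dist si sj ≤ dist si ti + dist ti sj := dist_triangle si ti sj
  have t5 : dist ti tj ≤ dist ti sj + dist sj tj := dist_triangle ti sj tj
  have n1 := dist_nonneg (x := si) (y := sj)
  have n2 := dist_nonneg (x := sj) (y := ti)
  have n3 := dist_nonneg (x := ti) (y := tj)
  have n4 := dist_nonneg (x := si) (y := ti)
  have n5 := dist_nonneg (x := sj) (y := tj)
  have n6 := dist_nonneg (x := si) (y := tj)
  have c5 := dist_comm sj ti
  have c1 := dist_comm si sj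
  have c2 := dist_comm ti tj
  have c3 := dist_comm si tj
  have c4 := dist_comm si ti
  rcases min_cases (min (2 * dist si sj + 2 * dist sj ti + dist ti tj)
      (2 * dist si sj + 2 * dist sj tj + dist tj ti))
      (2 * dist si ti + dist ti sj + dist sj tj) with ⟨hm, _⟩ | ⟨hm, _⟩
  · rcases min_cases (2 * dist si sj + 2 * dist sj ti + dist ti tj)
        (2 * dist si sj + 2 * dist sj tj + dist tj ti) with ⟨hn, _⟩ | ⟨hn, _⟩
    · have : mu si ti sj tj = 2 * dist si sj + 2 * dist sj ti + dist ti tj := by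
        rw [mu, hm, hn]
      rw [this]; linarith
    · have : mu si ti sj tj = 2 * dist si sj + 2 * dist sj tj + dist tj ti := by
        rw [mu, hm, hn]
      rw [this]; linarith
  · have : mu si ti sj tj = 2 * dist si ti + dist ti sj + dist sj tj := by
      rw [mu, hm]
    rw [this]; linarith

theorem u_add_u_add_two_dist_le_four_min_mu {α : Type*} [PseudoMetricSpace α]
    (si ti sj tj : α) :
    u si ti sj tj + u sj tj si ti + 2 * dist si sj
      ≤ 4 * min (mu si ti sj tj) (mu sj tj si ti) := by
  have k1 := key si ti sj tj
  have k2 := key sj tj si ti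
  rw [dist_comm sj si] at k2
  rcases min_cases (mu si ti sj tj) (mu sj tj si ti) with ⟨hm, _⟩ | ⟨hm, _⟩ <;>
    rw [hm] <;> linarith
end

section
/- Let w be a pseudometric and d,s_i,t_i,s_j,t_j points, with μ_{ij} = min{2w(s_i,s_j)+2w(s_j,t_i)+w(t_i,t_j), 2w(s_i,s_j)+2w(s_j,t_j)+w(t_j,t_i), 2w(s_i,t_i)+w(t_i,s_j)+w(s_j,t_j)}. Then 2w(d,s_i)+2w(d,s_j)+μ_{ij}+μ_{ji} + min{2(w(d,s_i)+w(s_i,t_i)) + w(t_i,d)+w(d,s_j)+w(s_j,t_j), 2(w(d,s_j)+w(s_j,t_j)) + w(t_j,d)+w(d,s_i)+w(s_i,t_i)} ≤ min{8w(d,s_i)+5μ_{ij}, 8w(d,s_j)+5μ_{ji}}. -/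
theorem combined_latency_bound {α : Type*} [PseudoMetricSpace α]
    (d si ti sj tj : α) :
    2 * dist d si + 2 * dist d sj + mu si ti sj tj + mu sj tj si ti +
      min (2 * (dist d si + dist si ti) + (dist ti d + dist d sj + dist sj tj))
        (2 * (dist d sj + dist sj tj) + (dist tj d + dist d si + dist si ti))
      ≤ min (8 * dist d si + 5 * mu si ti sj tj)
          (8 * dist d sj + 5 * mu sj tj si ti) := by
  have s0 : dist d si = dist si d := dist_comm d si
  have s1 : dist d ti = dist ti d := dist_comm d ti
  have s2 : dist d sj = dist sj d := dist_comm d sj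
  have s3 : dist d tj = dist tj d := dist_comm d tj
  have s4 : dist si d = dist d si := dist_comm si d
  have s5 : dist si ti = dist ti si := dist_comm si ti
  have s6 : dist si sj = dist sj si := dist_comm si sj
  have s7 : dist si tj = dist tj si := dist_comm si tj
  have s8 : dist ti d = dist d ti := dist_comm ti d
  have s9 : dist ti si = dist si ti := dist_comm ti si
  have s10 : dist ti sj = dist sj ti := dist_comm ti sj
  have s11 : dist ti tj = dist tj ti := dist_comm ti tj
  have s12 : dist sj d = dist d sj := dist_comm sj d
  have s13 : dist sj si = dist si sj := dist_comm sj si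
  have s14 : dist sj ti = dist ti sj := dist_comm sj ti
  have s15 : dist sj tj = dist tj sj := dist_comm sj tj
  have s16 : dist tj d = dist d tj := dist_comm tj d
  have s17 : dist tj si = dist si tj := dist_comm tj si
  have s18 : dist tj ti = dist ti tj := dist_comm tj ti
  have s19 : dist tj sj = dist sj tj := dist_comm tj sj
  have t0 : dist d ti ≤ dist d si + dist si ti := dist_triangle d si ti
  have t1 : dist d sj ≤ dist d si + dist si sj := dist_triangle d si sj
  have t2 : dist d tj ≤ dist d si + dist si tj := dist_triangle d si tj
  have t3 : dist d si ≤ dist d ti + dist ti si := dist_triangle d ti si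
  have t4 : dist d sj ≤ dist d ti + dist ti sj := dist_triangle d ti sj
  have t5 : dist d tj ≤ dist d ti + dist ti tj := dist_triangle d ti tj
  have t6 : dist d si ≤ dist d sj + dist sj si := dist_triangle d sj si
  have t7 : dist d ti ≤ dist d sj + dist sj ti := dist_triangle d sj ti
  have t8 : dist d tj ≤ dist d sj + dist sj tj := dist_triangle d sj tj
  have t9 : dist d si ≤ dist d tj + dist tj si := dist_triangle d tj si
  have t10 : dist d ti ≤ dist d tj + dist tj ti := dist_triangle d tj ti
  have t11 : dist d sj ≤ dist d tj + dist tj sj := dist_triangle d tj sj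
  have t12 : dist si ti ≤ dist si d + dist d ti := dist_triangle si d ti
  have t13 : dist si sj ≤ dist si d + dist d sj := dist_triangle si d sj
  have t14 : dist si tj ≤ dist si d + dist d tj := dist_triangle si d tj
  have t15 : dist si d ≤ dist si ti + dist ti d := dist_triangle si ti d
  have t16 : dist si sj ≤ dist si ti + dist ti sj := dist_triangle si ti sj
  have t17 : dist si tj ≤ dist si ti + dist ti tj := dist_triangle si ti tj
  have t18 : dist si d ≤ dist si sj + dist sj d := dist_triangle si sj d
  have t19 : dist si ti ≤ dist si sj + dist sj ti := dist_triangle si sj ti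
  have t20 : dist si tj ≤ dist si sj + dist sj tj := dist_triangle si sj tj
  have t21 : dist si d ≤ dist si tj + dist tj d := dist_triangle si tj d
  have t22 : dist si ti ≤ dist si tj + dist tj ti := dist_triangle si tj ti
  have t23 : dist si sj ≤ dist si tj + dist tj sj := dist_triangle si tj sj
  have t24 : dist ti si ≤ dist ti d + dist d si := dist_triangle ti d si
  have t25 : dist ti sj ≤ dist ti d + dist d sj := dist_triangle ti d sj
  have t26 : dist ti tj ≤ dist ti d + dist d tj := dist_triangle ti d tj
  have t27 : dist ti d ≤ dist ti si + dist si d := dist_triangle ti si d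
  have t28 : dist ti sj ≤ dist ti si + dist si sj := dist_triangle ti si sj
  have t29 : dist ti tj ≤ dist ti si + dist si tj := dist_triangle ti si tj
  have t30 : dist ti d ≤ dist ti sj + dist sj d := dist_triangle ti sj d
  have t31 : dist ti si ≤ dist ti sj + dist sj si := dist_triangle ti sj si
  have t32 : dist ti tj ≤ dist ti sj + dist sj tj := dist_triangle ti sj tj
  have t33 : dist ti d ≤ dist ti tj + dist tj d := dist_triangle ti tj d
  have t34 : dist ti si ≤ dist ti tj + dist tj si := dist_triangle ti tj si
  have t35 : dist ti sj ≤ dist ti tj + dist tj sj := dist_triangle ti tj sj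
  have t36 : dist sj si ≤ dist sj d + dist d si := dist_triangle sj d si
  have t37 : dist sj ti ≤ dist sj d + dist d ti := dist_triangle sj d ti
  have t38 : dist sj tj ≤ dist sj d + dist d tj := dist_triangle sj d tj
  have t39 : dist sj d ≤ dist sj si + dist si d := dist_triangle sj si d
  have t40 : dist sj ti ≤ dist sj si + dist si ti := dist_triangle sj si ti
  have t41 : dist sj tj ≤ dist sj si + dist si tj := dist_triangle sj si tj
  have t42 : dist sj d ≤ dist sj ti + dist ti d := dist_triangle sj ti d
  have t43 : dist sj si ≤ dist sj ti + dist ti si := dist_triangle sj ti si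
  have t44 : dist sj tj ≤ dist sj ti + dist ti tj := dist_triangle sj ti tj
  have t45 : dist sj d ≤ dist sj tj + dist tj d := dist_triangle sj tj d
  have t46 : dist sj si ≤ dist sj tj + dist tj si := dist_triangle sj tj si
  have t47 : dist sj ti ≤ dist sj tj + dist tj ti := dist_triangle sj tj ti
  have t48 : dist tj si ≤ dist tj d + dist d si := dist_triangle tj d si
  have t49 : dist tj ti ≤ dist tj d + dist d ti := dist_triangle tj d ti
  have t50 : dist tj sj ≤ dist tj d + dist d sj := dist_triangle tj d sj
  have t51 : dist tj d ≤ dist tj si + dist si d := dist_triangle tj si d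
  have t52 : dist tj ti ≤ dist tj si + dist si ti := dist_triangle tj si ti
  have t53 : dist tj sj ≤ dist tj si + dist si sj := dist_triangle tj si sj
  have t54 : dist tj d ≤ dist tj ti + dist ti d := dist_triangle tj ti d
  have t55 : dist tj si ≤ dist tj ti + dist ti si := dist_triangle tj ti si
  have t56 : dist tj sj ≤ dist tj ti + dist ti sj := dist_triangle tj ti sj
  have t57 : dist tj d ≤ dist tj sj + dist sj d := dist_triangle tj sj d
  have t58 : dist tj si ≤ dist tj sj + dist sj si := dist_triangle tj sj si
  have t59 : dist tj ti ≤ dist tj sj + dist sj ti := dist_triangle tj sj ti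
  have n0 : 0 ≤ dist d si := dist_nonneg
  have n1 : 0 ≤ dist d ti := dist_nonneg
  have n2 : 0 ≤ dist d sj := dist_nonneg
  have n3 : 0 ≤ dist d tj := dist_nonneg
  have n4 : 0 ≤ dist si ti := dist_nonneg
  have n5 : 0 ≤ dist si sj := dist_nonneg
  have n6 : 0 ≤ dist si tj := dist_nonneg
  have n7 : 0 ≤ dist ti tj := dist_nonneg
  have n8 : 0 ≤ dist sj ti := dist_nonneg
  have n9 : 0 ≤ dist sj tj := dist_nonneg
  have hA1 : mu si ti sj tj ≤ 2 * dist si sj + 2 * dist sj ti + dist ti tj := le_trans (min_le_left _ _) (min_le_left _ _)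
  have hA2 : mu si ti sj tj ≤ 2 * dist si sj + 2 * dist sj tj + dist tj ti := le_trans (min_le_left _ _) (min_le_right _ _)
  have hA3 : mu si ti sj tj ≤ 2 * dist si ti + dist ti sj + dist sj tj := min_le_right _ _
  have hB1 : mu sj tj si ti ≤ 2 * dist sj si + 2 * dist si tj + dist tj ti := le_trans (min_le_left _ _) (min_le_left _ _)
  have hB2 : mu sj tj si ti ≤ 2 * dist sj si + 2 * dist si ti + dist ti tj := le_trans (min_le_left _ _) (min_le_right _ _)
  have hB3 : mu sj tj si ti ≤ 2 * dist sj tj + dist tj si + dist si ti := min_le_right _ _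
  have hAeq : mu si ti sj tj = 2 * dist si sj + 2 * dist sj ti + dist ti tj ∨ mu si ti sj tj = 2 * dist si sj + 2 * dist sj tj + dist tj ti ∨ mu si ti sj tj = 2 * dist si ti + dist ti sj + dist sj tj := by
    unfold mu
    rcases min_cases (min (2 * dist si sj + 2 * dist sj ti + dist ti tj) (2 * dist si sj + 2 * dist sj tj + dist tj ti)) (2 * dist si ti + dist ti sj + dist sj tj) with ⟨h,_⟩|⟨h,_⟩
    · rcases min_cases (2 * dist si sj + 2 * dist sj ti + dist ti tj) (2 * dist si sj + 2 * dist sj tj + dist tj ti) with ⟨h2,_⟩|⟨h2,_⟩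
      · exact Or.inl (h.trans h2)
      · exact Or.inr (Or.inl (h.trans h2))
    · exact Or.inr (Or.inr h)
  have hBeq : mu sj tj si ti = 2 * dist sj si + 2 * dist si tj + dist tj ti ∨ mu sj tj si ti = 2 * dist sj si + 2 * dist si ti + dist ti tj ∨ mu sj tj si ti = 2 * dist sj tj + dist tj si + dist si ti := by
    unfold mu
    rcases min_cases (min (2 * dist sj si + 2 * dist si tj + dist tj ti) (2 * dist sj si + 2 * dist si ti + dist ti tj)) (2 * dist sj tj + dist tj si + dist si ti) with ⟨h,_⟩|⟨h,_⟩
    · rcases min_cases (2 * dist sj si + 2 * dist si tj + dist tj ti) (2 * dist sj si + 2 * dist si ti + dist ti tj) with ⟨h2,_⟩|⟨h2,_⟩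
      · exact Or.inl (h.trans h2)
      · exact Or.inr (Or.inl (h.trans h2))
    · exact Or.inr (Or.inr h)
  have hL1 : min (2 * (dist d si + dist si ti) + (dist ti d + dist d sj + dist sj tj)) (2 * (dist d sj + dist sj tj) + (dist tj d + dist d si + dist si ti)) ≤ 2 * (dist d si + dist si ti) + (dist ti d + dist d sj + dist sj tj) := min_le_left _ _
  have hL2 : min (2 * (dist d si + dist si ti) + (dist ti d + dist d sj + dist sj tj)) (2 * (dist d sj + dist sj tj) + (dist tj d + dist d si + dist si ti)) ≤ 2 * (dist d sj + dist sj tj) + (dist tj d + dist d si + dist si ti) := min_le_right _ _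
  rw [le_min_iff]
  constructor <;>
  · rcases hAeq with hA|hA|hA <;> rcases hBeq with hB|hB|hB <;>
      linarith
end
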